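/- Let k₁, k₂, u₂, v₂ be real numbers with v₂ ≠ 0, k₁ ≠ 0, u₂ ≠ 0, and suppose the quadratic v₂·X² + (k₂ - k₁ - u₂·v₂)·X + k₁·u₂ has two distinct real roots. Then there exist points (U⁺, V⁺) and (U⁻, V⁻) with U⁺·V⁺ = k₁ and U⁻·V⁻ = k₁ such that (U⁺ - u₂)·(V⁺ - v₂) - k₂ > 0 and (U⁻ - u₂)·(V⁻ - v₂) - k₂ < 0. -/
import Mathlib


theorem stmt_8 (k₁ k₂ u₂ v₂ : ℝ) (hv₂ : v₂ ≠ 0) (hk₁ : k₁ ≠ 0) (hu₂ : u₂ ≠ 0)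
    (hroots : ∃ r₁ r₂ : ℝ, r₁ ≠ r₂ ∧
      v₂ * r₁ ^ 2 + (k₂ - k₁ - u₂ * v₂) * r₁ + k₁ * u₂ = 0 ∧
      v₂ * r₂ ^ 2 + (k₂ - k₁ - u₂ * v₂) * r₂ + k₁ * u₂ = 0) :
    (∃ U V : ℝ, U * V = k₁ ∧ (U - u₂) * (V - v₂) - k₂ > 0) ∧
    (∃ U V : ℝ, U * V = k₁ ∧ (U - u₂) * (V - v₂) - k₂ < 0) := by
  obtain ⟨r₁, r₂, hne, h1, h2⟩ := hroots
  have hsub : (r₁ - r₂) * (v₂ * (r₁ + r₂) + (k₂ - k₁ - u₂ * v₂)) = 0 := by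
    linear_combination h1 - h2
  have hb : k₂ - k₁ - u₂ * v₂ = -v₂ * (r₁ + r₂) := by
    rcases mul_eq_zero.mp hsub with h | h
    · exact absurd (sub_eq_zero.mp h) hne
    · linarith
  have hc : k₁ * u₂ = v₂ * (r₁ * r₂) := by linear_combination h1 - r₁ * hb
  have hr₂ : r₂ ≠ 0 := by
    intro h
    apply mul_ne_zero hk₁ hu₂
    rw [hc, h]; ring
  set ε : ℝ := min |r₂| |r₂ - r₁| / 2 with hε_def
  have hεpos : 0 < ε := by
    have h1 : 0 < |r₂| := abs_pos.mpr hr₂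
    have h2 : 0 < |r₂ - r₁| := abs_pos.mpr (sub_ne_zero.mpr hne.symm)
    have := lt_min h1 h2
    positivity
  have hε1 : ε < |r₂| := by
    have := min_le_left |r₂| |r₂ - r₁|
    have h1 : 0 < |r₂| := abs_pos.mpr hr₂
    simp only [hε_def]; linarith
  have hε2 : ε < |r₂ - r₁| := by
    have := min_le_right |r₂| |r₂ - r₁|
    have h2 : 0 < |r₂ - r₁| := abs_pos.mpr (sub_ne_zero.mpr hne.symm)
    simp only [hε_def]; linarith
  have hUp : r₂ + ε ≠ 0 := by
    intro h
    have hεabs : ε < |r₂| := hε1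
    rcases abs_cases r₂ with ⟨he, _⟩ | ⟨he, _⟩ <;> nlinarith [abs_nonneg r₂]
  have hUm : r₂ - ε ≠ 0 := by
    intro h
    rcases abs_cases r₂ with ⟨he, _⟩ | ⟨he, _⟩ <;> nlinarith [abs_nonneg r₂]
  have key : ∀ U : ℝ, U ≠ 0 →
      (U - u₂) * (k₁ / U - v₂) - k₂ = -(v₂ * (U - r₁) * (U - r₂)) / U := by
    intro U hU
    field_simp
    ring_nf
    linear_combination (-U) * hb - hc
  have hsq1 : 0 < (r₂ - r₁) ^ 2 - ε ^ 2 := by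
    nlinarith [mul_self_lt_mul_self hεpos.le hε2, sq_abs (r₂ - r₁)]
  have hsq2 : 0 < r₂ ^ 2 - ε ^ 2 := by
    nlinarith [mul_self_lt_mul_self hεpos.le hε1, sq_abs r₂]
  set A : ℝ := (r₂ + ε - u₂) * (k₁ / (r₂ + ε) - v₂) - k₂ with hA
  set B : ℝ := (r₂ - ε - u₂) * (k₁ / (r₂ - ε) - v₂) - k₂ with hB
  have hAval : A = -(v₂ * (r₂ + ε - r₁) * ε) / (r₂ + ε) := by
    rw [hA, key _ hUp]; ring_nf
  have hBval : B = (v₂ * (r₂ - ε - r₁) * ε) / (r₂ - ε) := by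
    rw [hB, key _ hUm]; ring_nf
  have hprod : A * B < 0 := by
    rw [hAval, hBval]
    rw [div_mul_div_comm]
    apply div_neg_of_neg_of_pos
    · have : -(v₂ * (r₂ + ε - r₁) * ε) * (v₂ * (r₂ - ε - r₁) * ε) =
        -(v₂ ^ 2 * ε ^ 2 * ((r₂ - r₁) ^ 2 - ε ^ 2)) := by ring
      rw [this]
      have hv2sq : 0 < v₂ ^ 2 := by positivity
      have hεsq : 0 < ε ^ 2 := by positivity
      nlinarith [mul_pos (mul_pos hv2sq hεsq) hsq1]
    · have : (r₂ + ε) * (r₂ - ε) = r₂ ^ 2 - ε ^ 2 := by ring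
      rw [this]; exact hsq2
  have hmulP : (r₂ + ε) * (k₁ / (r₂ + ε)) = k₁ := mul_div_cancel₀ k₁ hUp
  have hmulM : (r₂ - ε) * (k₁ / (r₂ - ε)) = k₁ := mul_div_cancel₀ k₁ hUm
  rcases mul_neg_iff.mp hprod with ⟨hA0, hB0⟩ | ⟨hA0, hB0⟩
  · exact ⟨⟨r₂ + ε, k₁ / (r₂ + ε), hmulP, hA0⟩, ⟨r₂ - ε, k₁ / (r₂ - ε), hmulM, hB0⟩⟩
  · exact ⟨⟨r₂ - ε, k₁ / (r₂ - ε), hmulM, hB0⟩, ⟨r₂ + ε, k₁ / (r₂ + ε), hmulP, hA0⟩⟩
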